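/- arXiv:1407.3289 — 3 statements merged into one kernel-verified Lean document; each statement's English description precedes it below -/
import Mathlib

section
/- For every t ≥ 1 and δ ∈ (0,1), the Gaussian tails satisfy Φ(−t/√(1−δ)) ≤ C(δ) · t^{δ/(1−δ)} · Φ(−t)^{1/(1−δ)}, where C(δ) = 2^{1/(1−δ)} √(1−δ) · (2π)^{δ/(2(1−δ))}. -/
open Real Set

/-- The standard Gaussian cumulative distribution function. -/
noncomputable def gaussCDF (t : ℝ) : ℝ :=
  ∫ x in Iic t, (1 / Real.sqrt (2 * π)) * Real.exp (-x ^ 2 / 2)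

open MeasureTheory Filter

lemma tendsto_gauss_atBot : Tendsto (fun x : ℝ => Real.exp (-x ^ 2 / 2)) atBot (nhds 0) := by
  apply Real.tendsto_exp_atBot.comp
  have h1 : Tendsto (fun x : ℝ => x ^ 2) atBot atTop := by
    have := (tendsto_pow_atTop (two_ne_zero)).comp (tendsto_neg_atBot_atTop : Tendsto (fun x:ℝ => -x) atBot atTop)
    refine this.congr (fun x => ?_)
    simp [Function.comp, neg_pow]
  have : Tendsto (fun x : ℝ => -(x ^ 2)) atBot atBot := tendsto_neg_atTop_atBot.comp h1
  apply Tendsto.atBot_div_const (by norm_num : (0:ℝ) < 2)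
  simpa [neg_div] using this

lemma key_int₁ (a : ℝ) :
    ∫ x in Iic a, (-x) * Real.exp (-x ^ 2 / 2) = Real.exp (-a ^ 2 / 2) := by
  have hderiv : ∀ x ∈ Iic a, HasDerivAt (fun y : ℝ => Real.exp (-y ^ 2 / 2))
      ((-x) * Real.exp (-x ^ 2 / 2)) x := by
    intro x _
    have h : HasDerivAt (fun y : ℝ => -y ^ 2 / 2) (-x) x := by
      have := ((hasDerivAt_pow 2 x).neg).div_const 2
      refine this.congr_deriv ?_
      push_cast
      ring
    simpa [mul_comm] using h.exp
  have hint : IntegrableOn (fun x : ℝ => (-x) * Real.exp (-x ^ 2 / 2)) (Iic a) := by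
    have := integrable_mul_exp_neg_mul_sq (b := 1/2) (by norm_num)
    have h2 : Integrable (fun x : ℝ => (-x) * Real.exp (-x ^ 2 / 2)) := by
      have := this.neg
      refine this.congr ?_
      filter_upwards with x
      simp only [Pi.neg_apply]
      rw [show (-(1/2:ℝ) * x ^ 2) = -x^2/2 by ring]
      ring
    exact h2.integrableOn
  have := integral_Iic_of_hasDerivAt_of_tendsto' hderiv hint tendsto_gauss_atBot
  simpa using this

lemma key_int₂ (a : ℝ) (ha : a < 0) :
    ∫ x in Iic a, (1 + x⁻¹ ^ 2) * Real.exp (-x ^ 2 / 2) = Real.exp (-a ^ 2 / 2) / (-a) := by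
  have hderiv : ∀ x ∈ Iic a, HasDerivAt (fun y : ℝ => Real.exp (-y ^ 2 / 2) * y⁻¹)
      (-((1 + x⁻¹ ^ 2) * Real.exp (-x ^ 2 / 2))) x := by
    intro x hx
    have hx0 : x ≠ 0 := by
      have : x < 0 := lt_of_le_of_lt hx ha
      exact this.ne
    have h1 : HasDerivAt (fun y : ℝ => Real.exp (-y ^ 2 / 2))
        ((-x) * Real.exp (-x ^ 2 / 2)) x := by
      have h : HasDerivAt (fun y : ℝ => -y ^ 2 / 2) (-x) x := by
        have := ((hasDerivAt_pow 2 x).neg).div_const 2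
        refine this.congr_deriv ?_
        push_cast
        ring
      simpa [mul_comm] using h.exp
    have h2 : HasDerivAt (fun y : ℝ => y⁻¹) (-(x ^ 2)⁻¹) x := hasDerivAt_inv hx0
    have := h1.mul h2
    refine this.congr_deriv ?_
    field_simp
    ring
  have hint : IntegrableOn (fun x : ℝ => -((1 + x⁻¹ ^ 2) * Real.exp (-x ^ 2 / 2))) (Iic a) := by
    have hbase : Integrable (fun x : ℝ => Real.exp (-x ^ 2 / 2)) := by
      have := integrable_exp_neg_mul_sq (b := 1/2) (by norm_num)
      refine this.congr ?_
      filter_upwards with x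
      rw [show (-(1/2:ℝ) * x ^ 2) = -x^2/2 by ring]
    refine Integrable.mono' ((hbase.const_mul (1 + a⁻¹ ^ 2)).integrableOn) ?_ ?_
    · apply Measurable.aestronglyMeasurable
      measurability
    · filter_upwards [ae_restrict_mem measurableSet_Iic] with x hx
      have hx0 : x < 0 := lt_of_le_of_lt hx ha
      have h1 : x⁻¹ ^ 2 ≤ a⁻¹ ^ 2 := by
        rw [inv_pow, inv_pow]
        have hxa : x ≤ a := hx
        have hsq : a ^ 2 ≤ x ^ 2 := by nlinarith
        exact inv_anti₀ (by nlinarith) hsq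
      have hpos : (0:ℝ) < Real.exp (-x ^ 2 / 2) := Real.exp_pos _
      have h2 : (0:ℝ) ≤ 1 + x⁻¹ ^ 2 := by positivity
      rw [Real.norm_eq_abs, abs_neg, abs_of_nonneg (by positivity)]
      apply mul_le_mul_of_nonneg_right _ hpos.le
      linarith
  have hlim : Tendsto (fun x : ℝ => Real.exp (-x ^ 2 / 2) * x⁻¹) atBot (nhds 0) := by
    have hinv : Tendsto (fun x : ℝ => x⁻¹) atBot (nhds 0) := by
      have := (tendsto_inv_atTop_zero.comp (tendsto_neg_atBot_atTop : Tendsto (fun x:ℝ => -x) atBot atTop)).neg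
      refine (this.congr (fun x => ?_)).mono_right (by simp)
      simp [Function.comp, inv_neg]
    simpa using tendsto_gauss_atBot.mul hinv
  have := integral_Iic_of_hasDerivAt_of_tendsto' hderiv hint hlim
  rw [integral_neg] at this
  have h := neg_eq_iff_eq_neg.mp this
  rw [h]
  field_simp
  ring

lemma integrable_gauss : Integrable (fun x : ℝ => Real.exp (-x ^ 2 / 2)) := by
  have := integrable_exp_neg_mul_sq (b := 1/2) (by norm_num)
  refine this.congr ?_
  filter_upwards with x
  rw [show (-(1/2:ℝ) * x ^ 2) = -x^2/2 by ring]

lemma integrable_xgauss : Integrable (fun x : ℝ => (-x) * Real.exp (-x ^ 2 / 2)) := by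
  have := (integrable_mul_exp_neg_mul_sq (b := 1/2) (by norm_num)).neg
  refine this.congr ?_
  filter_upwards with x
  simp only [Pi.neg_apply]
  rw [show (-(1/2:ℝ) * x ^ 2) = -x^2/2 by ring]
  ring

lemma integrableOn_aux (a : ℝ) (ha : a < 0) :
    IntegrableOn (fun x : ℝ => (1 + x⁻¹ ^ 2) * Real.exp (-x ^ 2 / 2)) (Iic a) := by
  refine Integrable.mono' ((integrable_gauss.const_mul (1 + a⁻¹ ^ 2)).integrableOn) ?_ ?_
  · apply Measurable.aestronglyMeasurable
    measurability
  · filter_upwards [ae_restrict_mem measurableSet_Iic] with x hx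
    have hx0 : x < 0 := lt_of_le_of_lt hx ha
    have h1 : x⁻¹ ^ 2 ≤ a⁻¹ ^ 2 := by
      rw [inv_pow, inv_pow]
      have hxa : x ≤ a := hx
      have hsq : a ^ 2 ≤ x ^ 2 := by nlinarith
      exact inv_anti₀ (by nlinarith) hsq
    have hpos : (0:ℝ) < Real.exp (-x ^ 2 / 2) := Real.exp_pos _
    rw [Real.norm_eq_abs, abs_of_nonneg (by positivity)]
    apply mul_le_mul_of_nonneg_right _ hpos.le
    linarith

lemma gaussCDF_rewrite (a : ℝ) :
    gaussCDF a = (1 / Real.sqrt (2 * π)) * ∫ x in Iic a, Real.exp (-x ^ 2 / 2) := by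
  unfold gaussCDF
  rw [integral_const_mul]

lemma tail_upper (s : ℝ) (hs : 0 < s) :
    gaussCDF (-s) ≤ Real.exp (-s ^ 2 / 2) / (s * Real.sqrt (2 * π)) := by
  rw [gaussCDF_rewrite]
  have hsqrt : (0:ℝ) < Real.sqrt (2 * π) := Real.sqrt_pos.mpr (by positivity)
  have key : ∫ x in Iic (-s), Real.exp (-x ^ 2 / 2) ≤ Real.exp (-s ^ 2 / 2) / s := by
    have h1 : ∫ x in Iic (-s), (1/s) * ((-x) * Real.exp (-x ^ 2 / 2))
        = Real.exp (-s ^ 2 / 2) / s := by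
      rw [integral_const_mul, key_int₁]
      rw [neg_pow]
      ring_nf
    rw [← h1]
    apply setIntegral_mono_on integrable_gauss.integrableOn
      ((integrable_xgauss.const_mul (1/s)).integrableOn) measurableSet_Iic
    intro x hx
    have hx' : x ≤ -s := hx
    have h2 : 1 ≤ (-x) / s := (one_le_div hs).mpr (by linarith)
    have h3 : (0:ℝ) < Real.exp (-x ^ 2 / 2) := Real.exp_pos _
    have : Real.exp (-x ^ 2 / 2) ≤ ((-x)/s) * Real.exp (-x ^ 2 / 2) := by
      nlinarith
    calc Real.exp (-x ^ 2 / 2) ≤ ((-x)/s) * Real.exp (-x ^ 2 / 2) := this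
      _ = (1/s) * ((-x) * Real.exp (-x ^ 2 / 2)) := by ring
  calc (1 / Real.sqrt (2 * π)) * ∫ x in Iic (-s), Real.exp (-x ^ 2 / 2)
      ≤ (1 / Real.sqrt (2 * π)) * (Real.exp (-s ^ 2 / 2) / s) := by
        apply mul_le_mul_of_nonneg_left key (by positivity)
    _ = Real.exp (-s ^ 2 / 2) / (s * Real.sqrt (2 * π)) := by
        field_simp

lemma tail_lower (t : ℝ) (ht : 1 ≤ t) :
    Real.exp (-t ^ 2 / 2) / (2 * t * Real.sqrt (2 * π)) ≤ gaussCDF (-t) := by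
  rw [gaussCDF_rewrite]
  have ht0 : (0:ℝ) < t := lt_of_lt_of_le one_pos ht
  have hsqrt : (0:ℝ) < Real.sqrt (2 * π) := Real.sqrt_pos.mpr (by positivity)
  have hu : t⁻¹ ^ 2 ≤ 1 := by
    rw [inv_pow]
    have : (1:ℝ) ≤ t ^ 2 := by nlinarith
    rw [inv_le_one_iff₀]
    right; exact this
  have hden : (0:ℝ) < 1 + t⁻¹ ^ 2 := by positivity
  have key : Real.exp (-t ^ 2 / 2) / (2 * t) ≤ ∫ x in Iic (-t), Real.exp (-x ^ 2 / 2) := by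
    have h1 : ∫ x in Iic (-t), (1/(1 + t⁻¹ ^ 2)) * ((1 + x⁻¹ ^ 2) * Real.exp (-x ^ 2 / 2))
        = (1/(1 + t⁻¹ ^ 2)) * (Real.exp (-t ^ 2 / 2) / t) := by
      rw [integral_const_mul, key_int₂ (-t) (by linarith)]
      rw [neg_pow, neg_neg]
      ring_nf
    have h2 : Real.exp (-t ^ 2 / 2) / (2 * t)
        ≤ (1/(1 + t⁻¹ ^ 2)) * (Real.exp (-t ^ 2 / 2) / t) := by
      rw [one_div, inv_mul_eq_div, div_div]
      apply div_le_div_of_nonneg_left (Real.exp_pos _).le (by positivity)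
      nlinarith
    refine h2.trans ?_
    rw [← h1]
    apply setIntegral_mono_on
      (((integrableOn_aux (-t) (by linarith)).const_mul (1/(1 + t⁻¹ ^ 2))))
      integrable_gauss.integrableOn measurableSet_Iic
    intro x hx
    have hx' : x ≤ -t := hx
    have hx0 : x < 0 := by linarith
    have h3 : x⁻¹ ^ 2 ≤ t⁻¹ ^ 2 := by
      rw [inv_pow, inv_pow]
      have hsq : t ^ 2 ≤ x ^ 2 := by nlinarith
      exact inv_anti₀ (by positivity) hsq
    have h4 : (0:ℝ) < Real.exp (-x ^ 2 / 2) := Real.exp_pos _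
    rw [one_div, inv_mul_eq_div, div_le_iff₀ hden]
    nlinarith
  calc Real.exp (-t ^ 2 / 2) / (2 * t * Real.sqrt (2 * π))
      = (1 / Real.sqrt (2 * π)) * (Real.exp (-t ^ 2 / 2) / (2 * t)) := by
        field_simp
    _ ≤ (1 / Real.sqrt (2 * π)) * ∫ x in Iic (-t), Real.exp (-x ^ 2 / 2) := by
        apply mul_le_mul_of_nonneg_left key (by positivity)

/-- The altitude-training inequality: for `t ≥ 1` and `δ ∈ (0,1)`,
`Φ(−t/√(1−δ)) ≤ C(δ) · t^{δ/(1−δ)} · Φ(−t)^{1/(1−δ)}` with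
`C(δ) = 2^{1/(1−δ)} √(1−δ) (2π)^{δ/(2(1−δ))}`. -/
theorem altitude_training_tail_inequality (t δ : ℝ) (ht : 1 ≤ t) (hδ0 : 0 < δ) (hδ1 : δ < 1) :
    gaussCDF (-(t / Real.sqrt (1 - δ))) ≤
      ((2 : ℝ) ^ (1 / (1 - δ)) * Real.sqrt (1 - δ) * (2 * π) ^ (δ / (2 * (1 - δ)))) *
        t ^ (δ / (1 - δ)) * gaussCDF (-t) ^ (1 / (1 - δ)) := by
  set a := 1 - δ with ha_def
  have ha0 : 0 < a := by simp only [ha_def]; linarith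
  have ht0 : (0:ℝ) < t := lt_of_lt_of_le one_pos ht
  set sa := Real.sqrt a with hsa_def
  have hsa0 : 0 < sa := Real.sqrt_pos.mpr ha0
  have hsa2 : sa ^ 2 = a := Real.sq_sqrt ha0.le
  set p := 1 / a with hp_def
  have hp0 : 0 < p := by positivity
  have hP : (0:ℝ) < 2 * π := by positivity
  have hsqrt : (0:ℝ) < Real.sqrt (2 * π) := Real.sqrt_pos.mpr hP
  set L := Real.exp (-t ^ 2 / 2) / (2 * t * Real.sqrt (2 * π)) with hL_def
  have hL0 : 0 < L := by positivity
  have hs0 : 0 < t / sa := by positivity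
  have h1 := tail_upper (t / sa) hs0
  have h2 : L ^ p ≤ gaussCDF (-t) ^ p :=
    Real.rpow_le_rpow hL0.le (tail_lower t ht) hp0.le
  have h2pow : (0:ℝ) < (2:ℝ) ^ p := Real.rpow_pos_of_pos two_pos p
  have htpow : (0:ℝ) < t ^ p := Real.rpow_pos_of_pos ht0 p
  have hPpow : (0:ℝ) < (2 * π) ^ ((1/2) * p) := Real.rpow_pos_of_pos hP _
  have e1 : L ^ p = Real.exp (-t ^ 2 / 2 * p) /
      ((2:ℝ) ^ p * t ^ p * Real.sqrt (2 * π) ^ p) := by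
    rw [hL_def, Real.div_rpow (Real.exp_pos _).le (by positivity), ← Real.exp_mul,
      Real.mul_rpow (by positivity) hsqrt.le, Real.mul_rpow (by norm_num) ht0.le]
  have e2 : Real.sqrt (2 * π) ^ p = (2 * π) ^ ((1/2) * p) := by
    rw [Real.sqrt_eq_rpow, ← Real.rpow_mul hP.le]
  have e3 : t ^ (δ / a) = t ^ p / t := by
    have : δ / a = p - 1 := by
      rw [hp_def]
      field_simp [ha_def]
      linarith
    rw [this, Real.rpow_sub ht0, Real.rpow_one]
  have e4 : (2 * π) ^ (δ / (2 * a)) = (2 * π) ^ ((1/2) * p) / Real.sqrt (2 * π) := by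
    have : δ / (2 * a) = (1/2) * p - 1/2 := by
      rw [hp_def]
      field_simp [ha_def]
      ring
    rw [this, Real.rpow_sub hP, ← Real.sqrt_eq_rpow]
  have e5 : -(t / sa) ^ 2 / 2 = -t ^ 2 / 2 * p := by
    rw [div_pow, hsa2, hp_def]
    field_simp
  have hEq : ((2:ℝ) ^ p * sa * (2 * π) ^ (δ / (2 * a))) * t ^ (δ / a) * L ^ p
      = Real.exp (-(t / sa) ^ 2 / 2) / (t / sa * Real.sqrt (2 * π)) := by
    rw [e1, e2, e3, e4, e5]
    field_simp
  calc gaussCDF (-(t / sa))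
      ≤ Real.exp (-(t / sa) ^ 2 / 2) / (t / sa * Real.sqrt (2 * π)) := h1
    _ = ((2:ℝ) ^ p * sa * (2 * π) ^ (δ / (2 * a))) * t ^ (δ / a) * L ^ p := hEq.symm
    _ ≤ ((2:ℝ) ^ p * sa * (2 * π) ^ (δ / (2 * a))) * t ^ (δ / a) * gaussCDF (-t) ^ p := by
        apply mul_le_mul_of_nonneg_left h2
        positivity
end

section
/- In the Poisson topic model where the expected document length ‖λ^{(τ)}‖₁ = λ is independent of topic τ, let x̃ be obtained from x by binomial dropout with rate δ ∈ (0,1) (each coordinate x̃_j ~ Binomial(x_j, 1−δ) independently). Then for every v ∈ ℕ^d, P(y = 1 | x̃ = v) = P(y = 1 | x = v). -/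
/-- Joint probability that the topic-conditional independent-Poisson document
equals `v`: `∏_j e^{−λ_j} λ_j^{v_j} / v_j!`. -/
noncomputable def poissonLik {d : ℕ} (lam : Fin d → ℝ) (v : Fin d → ℕ) : ℝ :=
  ∏ j, Real.exp (-lam j) * lam j ^ (v j) / ((v j).factorial : ℝ)

/-- Probability that the binomial-dropout corruption (rate `δ`) of the
topic-conditional Poisson document equals `v`. -/
noncomputable def dropoutLik {d : ℕ} (lam : Fin d → ℝ) (δ : ℝ) (v : Fin d → ℕ) : ℝ :=
  ∑' u : Fin d → ℕ,
    poissonLik lam u * ∏ j, ((u j).choose (v j) : ℝ) * (1 - δ) ^ (v j) * δ ^ (u j - v j)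

/-- Marginal probability of observing a document `v` with label `c`, for a
given per-topic likelihood `lik`: prior of `c` times the topic mixture of the
likelihood. -/
noncomputable def classJoint {Θ : Type*} {d : ℕ} (py : Bool → ℝ) (ρ : Bool → Θ → ℝ)
    (lik : Θ → (Fin d → ℕ) → ℝ) (c : Bool) (v : Fin d → ℕ) : ℝ :=
  py c * ∑' τ : Θ, ρ c τ * lik τ v

/-- Single-coordinate Poisson thinning: summing the Poisson(λ) pmf times the
binomial dropout kernel gives `e^{-λ} e^{λδ} ((1-δ)λ)^k / k!`. -/
lemma coord_hasSum (lam δ : ℝ) (k : ℕ) :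
    HasSum (fun n : ℕ => Real.exp (-lam) * lam ^ n / (n.factorial : ℝ) *
        ((n.choose k : ℝ) * (1 - δ) ^ k * δ ^ (n - k)))
      (Real.exp (-lam) * Real.exp (lam * δ) * ((1 - δ) * lam) ^ k / (k.factorial : ℝ)) := by
  set F : ℕ → ℝ := fun n => Real.exp (-lam) * lam ^ n / (n.factorial : ℝ) *
      ((n.choose k : ℝ) * (1 - δ) ^ k * δ ^ (n - k)) with hF
  have hinj : Function.Injective (fun m : ℕ => m + k) := fun a b h => by simpa using h
  have hzero : ∀ n ∉ Set.range (fun m : ℕ => m + k), F n = 0 := by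
    intro n hn
    have hnk : n < k := by
      by_contra h
      exact hn ⟨n - k, Nat.sub_add_cancel (le_of_not_gt h)⟩
    simp [hF, Nat.choose_eq_zero_of_lt hnk]
  rw [← hinj.hasSum_iff hzero]
  have hexp : HasSum (fun m : ℕ => (lam * δ) ^ m / (m.factorial : ℝ))
      (Real.exp (lam * δ)) := by
    rw [Real.exp_eq_exp_ℝ]
    exact NormedSpace.expSeries_div_hasSum_exp (lam * δ)
  have h := hexp.mul_left (Real.exp (-lam) * (1 - δ) ^ k * lam ^ k / (k.factorial : ℝ))
  have hfun : (F ∘ fun m : ℕ => m + k) = fun m : ℕ =>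
      Real.exp (-lam) * (1 - δ) ^ k * lam ^ k / (k.factorial : ℝ) *
        ((lam * δ) ^ m / (m.factorial : ℝ)) := by
    funext m
    have hcf : (((m + k).choose k : ℝ) * m.factorial * k.factorial)
        = ((m + k).factorial : ℝ) := by
      exact_mod_cast congrArg (Nat.cast (R := ℝ))
        (Nat.add_choose_mul_factorial_mul_factorial m k)
    have h2 : ((m : ℕ).factorial : ℝ) ≠ 0 := Nat.cast_ne_zero.mpr (Nat.factorial_ne_zero _)
    have h3 : ((k : ℕ).factorial : ℝ) ≠ 0 := Nat.cast_ne_zero.mpr (Nat.factorial_ne_zero _)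
    have h1 : ((m + k).factorial : ℝ) ≠ 0 := Nat.cast_ne_zero.mpr (Nat.factorial_ne_zero _)
    have hchoose : (((m + k).choose k : ℕ) : ℝ)
        = ((m + k).factorial : ℝ) / ((m.factorial : ℝ) * (k.factorial : ℝ)) := by
      rw [eq_div_iff (by positivity)]
      rw [← hcf]; ring
    show Real.exp (-lam) * lam ^ (m + k) / ((m + k).factorial : ℝ) *
        (((m + k).choose k : ℝ) * (1 - δ) ^ k * δ ^ (m + k - k)) = _
    rw [Nat.add_sub_cancel, hchoose, pow_add, mul_pow]
    field_simp
  rw [hfun]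
  have hval : Real.exp (-lam) * Real.exp (lam * δ) * ((1 - δ) * lam) ^ k / (k.factorial : ℝ)
      = Real.exp (-lam) * (1 - δ) ^ k * lam ^ k / (k.factorial : ℝ) * Real.exp (lam * δ) := by
    rw [mul_pow]; ring
  rw [hval]
  exact h

/-- Fubini for finite products of nonnegative summable families over `Fin d → ℕ`. -/
lemma pi_hasSum {d : ℕ} (f : Fin d → ℕ → ℝ) (a : Fin d → ℝ)
    (h0 : ∀ j n, 0 ≤ f j n) (hf : ∀ j, HasSum (f j) (a j)) :
    HasSum (fun u : Fin d → ℕ => ∏ j, f j (u j)) (∏ j, a j) := by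
  induction d with
  | zero =>
      simpa using hasSum_unique (fun _ : Fin 0 → ℕ => (1 : ℝ))
  | succ d ih =>
      have hIH := ih (fun j => f j.succ) (fun j => a j.succ)
        (fun j n => h0 j.succ n) (fun j => hf j.succ)
      have hsum : Summable (fun p : ℕ × (Fin d → ℕ) =>
          f 0 p.1 * ∏ j, f j.succ (p.2 j)) := by
        apply summable_mul_of_summable_norm (f := f 0)
          (g := fun u : Fin d → ℕ => ∏ j, f j.succ (u j))
        · refine (hf 0).summable.congr fun n => ?_
          exact (Real.norm_of_nonneg (h0 0 n)).symm
        · refine hIH.summable.congr fun u => ?_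
          exact (Real.norm_of_nonneg (Finset.prod_nonneg fun j _ => h0 j.succ (u j))).symm
      have hmul := (hf 0).mul hIH hsum
      set e : (ℕ × (Fin d → ℕ)) ≃ (Fin (d + 1) → ℕ) := (Fin.consEquiv (fun _ : Fin (d + 1) => ℕ)) with he
      rw [← e.hasSum_iff (f := fun u : Fin (d + 1) → ℕ => ∏ j, f j (u j))]
      have heq : ((fun u : Fin (d + 1) → ℕ => ∏ j, f j (u j)) ∘ e)
          = fun p : ℕ × (Fin d → ℕ) => f 0 p.1 * ∏ j, f j.succ (p.2 j) := by
        funext p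
        simp [he, Fin.consEquiv, Fin.prod_univ_succ]
      rw [heq, Fin.prod_univ_succ]
      exact hmul

/-- Poisson thinning: the dropout likelihood is the Poisson likelihood scaled by
a factor depending only on `δ`, the total rate, and `v`. -/
lemma dropoutLik_eq {d : ℕ} (lam : Fin d → ℝ) (hlam : ∀ j, 0 ≤ lam j)
    (δ : ℝ) (hδ0 : 0 < δ) (hδ1 : δ < 1) (v : Fin d → ℕ) :
    dropoutLik lam δ v =
      (Real.exp (δ * ∑ j, lam j) * (1 - δ) ^ (∑ j, v j)) * poissonLik lam v := by
  set f : Fin d → ℕ → ℝ := fun j n =>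
    Real.exp (-lam j) * lam j ^ n / (n.factorial : ℝ) *
      ((n.choose (v j) : ℝ) * (1 - δ) ^ (v j) * δ ^ (n - v j)) with hfdef
  have h1δ : (0:ℝ) ≤ 1 - δ := by linarith
  have h0 : ∀ j n, 0 ≤ f j n := by
    intro j n
    refine mul_nonneg (div_nonneg (mul_nonneg (Real.exp_pos _).le
      (pow_nonneg (hlam j) _)) (Nat.cast_nonneg _)) ?_
    exact mul_nonneg (mul_nonneg (Nat.cast_nonneg _) (pow_nonneg h1δ _))
      (pow_nonneg hδ0.le _)
  have key := pi_hasSum f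
    (fun j => Real.exp (-lam j) * Real.exp (lam j * δ) * ((1 - δ) * lam j) ^ (v j)
      / ((v j).factorial : ℝ))
    h0 (fun j => coord_hasSum (lam j) δ (v j))
  have hlhs : dropoutLik lam δ v = ∑' u : Fin d → ℕ, ∏ j, f j (u j) := by
    unfold dropoutLik poissonLik
    congr 1
    funext u
    rw [← Finset.prod_mul_distrib]
  rw [hlhs, key.tsum_eq]
  unfold poissonLik
  have hterm : ∀ j : Fin d, Real.exp (-lam j) * Real.exp (lam j * δ)
      * ((1 - δ) * lam j) ^ (v j) / ((v j).factorial : ℝ)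
      = (Real.exp (δ * lam j) * (1 - δ) ^ (v j))
        * (Real.exp (-lam j) * lam j ^ (v j) / ((v j).factorial : ℝ)) := by
    intro j
    rw [mul_comm (lam j) δ, mul_pow]
    ring
  rw [Finset.prod_congr rfl (fun j _ => hterm j), Finset.prod_mul_distrib,
    Finset.prod_mul_distrib, ← Real.exp_sum, Finset.prod_pow_eq_pow_sum, ← Finset.mul_sum]

/-- Dropout preserves the Bayes decision boundary in the Poisson topic model:
if the expected document length `‖λ^{(τ)}‖₁` is the same for every topic `τ`,
then for every count vector `v`, `P(y = 1 ∣ x̃ = v) = P(y = 1 ∣ x = v)`, where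
`x̃` is the binomial-dropout corruption of `x` with rate `δ ∈ (0,1)`. -/
theorem dropout_preserves_bayes_boundary
    {Θ : Type*} [Countable Θ] (d : ℕ)
    (lam : Θ → Fin d → ℝ) (hlam : ∀ τ j, 0 ≤ lam τ j)
    (Λ : ℝ) (hΛpos : 0 < Λ) (hlen : ∀ τ, ∑ j, lam τ j = Λ)
    (δ : ℝ) (hδ0 : 0 < δ) (hδ1 : δ < 1)
    (py : Bool → ℝ) (hpy : ∀ c, 0 ≤ py c) (hpy1 : py true + py false = 1)
    (ρ : Bool → Θ → ℝ) (hρ0 : ∀ c τ, 0 ≤ ρ c τ) (hρ1 : ∀ c, ∑' τ : Θ, ρ c τ = 1)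
    (v : Fin d → ℕ)
    (hden : 0 < classJoint py ρ (fun τ => poissonLik (lam τ)) true v +
        classJoint py ρ (fun τ => poissonLik (lam τ)) false v)
    (hdent : 0 < classJoint py ρ (fun τ => dropoutLik (lam τ) δ) true v +
        classJoint py ρ (fun τ => dropoutLik (lam τ) δ) false v) :
    classJoint py ρ (fun τ => dropoutLik (lam τ) δ) true v /
        (classJoint py ρ (fun τ => dropoutLik (lam τ) δ) true v +
          classJoint py ρ (fun τ => dropoutLik (lam τ) δ) false v) =
      classJoint py ρ (fun τ => poissonLik (lam τ)) true v /
        (classJoint py ρ (fun τ => poissonLik (lam τ)) true v +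
          classJoint py ρ (fun τ => poissonLik (lam τ)) false v) := by
  set K : ℝ := Real.exp (δ * Λ) * (1 - δ) ^ (∑ j, v j) with hK
  have hKpos : 0 < K := by
    have : (0:ℝ) < 1 - δ := by linarith
    positivity
  have hscale : ∀ c, classJoint py ρ (fun τ => dropoutLik (lam τ) δ) c v =
      K * classJoint py ρ (fun τ => poissonLik (lam τ)) c v := by
    intro c
    unfold classJoint
    have : ∀ τ : Θ, ρ c τ * dropoutLik (lam τ) δ v =
        K * (ρ c τ * poissonLik (lam τ) v) := by
      intro τ
      rw [dropoutLik_eq (lam τ) (hlam τ) δ hδ0 hδ1 v, hlen τ]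
      ring
    rw [tsum_congr this, tsum_mul_left]
    ring
  rw [hscale, hscale, ← mul_add, mul_div_mul_left _ _ (ne_of_gt hKpos)]
end

section
/- Let S = Σ_j w_j Z_j with Z_j independent Poisson(λ_j), μ = E[S] > 0, σ² = Var(S) > 0, and let S̃ = Σ_j w_j Z̃_j with Z̃_j independent Poisson((1−δ)λ_j). If P(S̃ ≤ 0) ≥ Φ(−√(1−δ)·μ/σ) − C/√(1−δ)·√Ψ and P(S ≤ 0) ≤ Φ(−μ/σ) + C·√Ψ hold with Ψ = max_j w_j² / Σ_j λ_j w_j² and C = 4 (Berry–Esseen), then whenever P(S̃ ≤ 0) + (C/√(1−δ))√Ψ ≤ Φ(−1), one has P(S ≤ 0) ≤ K(δ)·(−log(P(S̃≤0) + (C/√(1−δ))√Ψ))^{δ/(2(1−δ))} · (P(S̃≤0) + (C/√(1−δ))√Ψ)^{1/(1−δ)} + C√Ψ, where K(δ) = 2^{1/(1−δ)}√(1−δ)·(2π)^{δ/(2(1−δ))}. -/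
open ProbabilityTheory MeasureTheory Finset Real Set
open scoped NNReal

noncomputable def gpdf (x : ℝ) : ℝ := 1 / Real.sqrt (2 * π) * Real.exp (-x ^ 2 / 2)

lemma gpdf_pos (x : ℝ) : 0 < gpdf x := by
  unfold gpdf
  have : 0 < Real.sqrt (2 * π) := Real.sqrt_pos.mpr (by positivity)
  positivity

lemma gpdf_neg (x : ℝ) : gpdf (-x) = gpdf x := by unfold gpdf; rw [neg_pow]; ring_nf

lemma gpdf_eq' : gpdf = fun x => 1 / Real.sqrt (2 * π) * Real.exp (-(1/2) * x ^ 2) := by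
  funext x; unfold gpdf; congr 1; congr 1; ring

lemma integrable_gpdf : Integrable gpdf := by
  rw [gpdf_eq']
  exact (integrable_exp_neg_mul_sq (by norm_num : (0:ℝ) < 1/2)).const_mul _

lemma continuous_gpdf : Continuous gpdf := by
  unfold gpdf; continuity

lemma exp_arg (x : ℝ) : Real.exp (-(1/2) * x ^ 2) = Real.exp (-x ^ 2 / 2) := by
  congr 1; ring

lemma hasDerivAt_gpdf (x : ℝ) : HasDerivAt gpdf (-x * gpdf x) x := by
  have h1 : HasDerivAt (fun y : ℝ => -y ^ 2 / 2) (-x) x := by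
    have := ((hasDerivAt_pow 2 x).neg).div_const 2
    simpa using this.congr_deriv (by push_cast; ring)
  have h2 := (h1.exp).const_mul (1 / Real.sqrt (2 * π))
  have he : gpdf = fun y => 1 / Real.sqrt (2 * π) * Real.exp (-y ^ 2 / 2) := rfl
  rw [he]
  refine h2.congr_deriv ?_
  ring

lemma tendsto_gpdf_atBot : Filter.Tendsto gpdf Filter.atBot (nhds 0) := by
  have h1 : Filter.Tendsto (fun x : ℝ => -x ^ 2 / 2) Filter.atBot Filter.atBot := by
    have hsq : Filter.Tendsto (fun x : ℝ => x ^ 2) Filter.atBot Filter.atTop := by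
      have := (Filter.tendsto_id (α := ℝ) (x := Filter.atBot)).atBot_mul_atBot₀
        Filter.tendsto_id
      exact this.congr fun x => (sq x).symm
    have h2 := Filter.tendsto_neg_atTop_atBot.comp hsq
    refine Filter.Tendsto.atBot_div_const two_pos (h2.congr fun x => rfl)
  have h2 := (Real.tendsto_exp_atBot).comp h1
  have h3 := h2.const_mul (1 / Real.sqrt (2 * π))
  rw [mul_zero] at h3
  exact h3.congr fun x => rfl

lemma integrable_mul_gpdf : Integrable (fun x => -x * gpdf x) := by
  have h := (integrable_mul_exp_neg_mul_sq (by norm_num : (0:ℝ) < 1/2)).const_mul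
    (-(1 / Real.sqrt (2 * π)))
  refine h.congr (Filter.Eventually.of_forall fun x => ?_)
  simp only [gpdf, exp_arg]; ring

lemma integral_neg_mul_gpdf (a : ℝ) : ∫ x in Iic a, (-x * gpdf x) = gpdf a := by
  have := integral_Iic_of_hasDerivAt_of_tendsto' (f := gpdf) (f' := fun x => -x * gpdf x)
    (a := a) (fun x _ => hasDerivAt_gpdf x) integrable_mul_gpdf.integrableOn tendsto_gpdf_atBot
  simpa using this

lemma gaussCDF_def (t : ℝ) : gaussCDF t = ∫ x in Iic t, gpdf x := rfl

lemma gaussCDF_pos (t : ℝ) : 0 < gaussCDF t := by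
  rw [gaussCDF_def]
  rw [setIntegral_pos_iff_support_of_nonneg_ae
    (Filter.Eventually.of_forall fun x => (gpdf_pos x).le) integrable_gpdf.integrableOn]
  have : Function.support gpdf = univ := by
    ext x; simp [Function.mem_support, (gpdf_pos x).ne']
  rw [this, univ_inter, Real.volume_Iic]
  simp 

lemma gaussCDF_strictMono : StrictMono gaussCDF := by
  intro a b hab
  have h1 : gaussCDF b = gaussCDF a + ∫ x in Ioc a b, gpdf x := by
    rw [gaussCDF_def, gaussCDF_def, ← setIntegral_union (Iic_disjoint_Ioc le_rfl)
      measurableSet_Ioc integrable_gpdf.integrableOn integrable_gpdf.integrableOn,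
      Iic_union_Ioc_eq_Iic hab.le]
  have h2 : 0 < ∫ x in Ioc a b, gpdf x := by
    rw [setIntegral_pos_iff_support_of_nonneg_ae
      (Filter.Eventually.of_forall fun x => (gpdf_pos x).le) integrable_gpdf.integrableOn]
    have : Function.support gpdf = univ := by
      ext x; simp [Function.mem_support, (gpdf_pos x).ne']
    rw [this, univ_inter, Real.volume_Ioc]
    simp [hab]
  linarith


/-- Upper Gaussian tail bound `Φ(-t) ≤ φ(t)/t`. -/
lemma gaussCDF_neg_le (t : ℝ) (ht : 0 < t) : gaussCDF (-t) ≤ gpdf t / t := by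
  rw [gaussCDF_def]
  have h1 : ∫ x in Iic (-t), gpdf x ≤ ∫ x in Iic (-t), (1/t) * (-x * gpdf x) := by
    refine setIntegral_mono_on integrable_gpdf.integrableOn
      ((integrable_mul_gpdf.const_mul (1/t)).integrableOn) measurableSet_Iic fun x hx => ?_
    have hx' : x ≤ -t := hx
    have h2 : 1 ≤ (1/t) * (-x) := by
      rw [one_div, ← div_eq_inv_mul, le_div_iff₀ ht]; linarith
    nlinarith [gpdf_pos x]
  have h2 : ∫ x in Iic (-t), (1/t) * (-x * gpdf x) = (1/t) * gpdf (-t) := by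
    rw [integral_const_mul, integral_neg_mul_gpdf]
  rw [h2, gpdf_neg] at h1
  calc (∫ x in Iic (-t), gpdf x) ≤ 1/t * gpdf t := h1
  _ = gpdf t / t := by ring

/-- Lower Gaussian tail bound `Φ(-s) ≥ s/(1+s²) φ(s)`. -/
lemma gaussCDF_neg_ge (s : ℝ) : s / (1 + s ^ 2) * gpdf s ≤ gaussCDF (-s) := by
  set h : ℝ → ℝ := fun u => -u / (1 + u ^ 2) * gpdf u with hh
  set h' : ℝ → ℝ := fun u => (u ^ 4 + 2 * u ^ 2 - 1) / (1 + u ^ 2) ^ 2 * gpdf u with hh'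
  have hden : ∀ u : ℝ, (0:ℝ) < 1 + u ^ 2 := fun u => by positivity
  have hderiv : ∀ u : ℝ, HasDerivAt h (h' u) u := by
    intro u
    have ha : HasDerivAt (fun u : ℝ => -u / (1 + u ^ 2))
        ((u ^ 2 - 1) / (1 + u ^ 2) ^ 2) u := by
      have hnum : HasDerivAt (fun u : ℝ => -u) (-1) u := (hasDerivAt_id u).neg
      have hden' : HasDerivAt (fun u : ℝ => 1 + u ^ 2) (2 * u) u := by
        simpa using ((hasDerivAt_pow 2 u).const_add 1)
      have := hnum.div hden' (hden u).ne'
      refine this.congr_deriv ?_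
      ring
    have := ha.mul (hasDerivAt_gpdf u)
    refine this.congr_deriv ?_; symm
    have e : (u ^ 2 - 1) / (1 + u ^ 2) ^ 2 + (-u / (1 + u ^ 2)) * (-u) =
        (u ^ 4 + 2 * u ^ 2 - 1) / (1 + u ^ 2) ^ 2 := by
      field_simp
      ring
    calc (u ^ 4 + 2 * u ^ 2 - 1) / (1 + u ^ 2) ^ 2 * gpdf u
        = ((u ^ 2 - 1) / (1 + u ^ 2) ^ 2 + (-u / (1 + u ^ 2)) * (-u)) * gpdf u := by rw [e]
    _ = (u ^ 2 - 1) / (1 + u ^ 2) ^ 2 * gpdf u + -u / (1 + u ^ 2) * (-u * gpdf u) := by ring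
  have hbound : ∀ u : ℝ, |h' u| ≤ gpdf u := by
    intro u
    rw [hh', abs_mul, abs_of_pos (gpdf_pos u)]
    have h1 : |(u ^ 4 + 2 * u ^ 2 - 1) / (1 + u ^ 2) ^ 2| ≤ 1 := by
      rw [abs_div, abs_of_pos (by positivity : (0:ℝ) < (1 + u ^ 2) ^ 2),
        div_le_one (by positivity)]
      rw [abs_le]; constructor <;> nlinarith [sq_nonneg u, sq_nonneg (u^2)]
    nlinarith [gpdf_pos u, abs_nonneg ((u ^ 4 + 2 * u ^ 2 - 1) / (1 + u ^ 2) ^ 2)]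
  have hint : Integrable h' := by
    refine Integrable.mono' integrable_gpdf ?_ (Filter.Eventually.of_forall hbound)
    refine Continuous.aestronglyMeasurable ?_
    exact ((continuous_pow 4).add (continuous_const.mul (continuous_pow 2)) |>.sub continuous_const
      |>.div ((continuous_const.add (continuous_pow 2)).pow 2)
      (fun u => by simp only [Pi.add_apply, Pi.pow_apply]; positivity)).mul continuous_gpdf
  have htend : Filter.Tendsto h Filter.atBot (nhds 0) := by
    have hb : ∀ u : ℝ, |h u| ≤ gpdf u := by
      intro u
      show |(-u) / (1 + u ^ 2) * gpdf u| ≤ gpdf u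
      rw [abs_mul, abs_of_pos (gpdf_pos u)]
      have h1 : |(-u) / (1 + u ^ 2)| ≤ 1 := by
        rw [abs_div, abs_of_pos (hden u), div_le_one (hden u), abs_neg]
        cases abs_cases u with
        | inl hc => nlinarith [hc.1]
        | inr hc => nlinarith [hc.1]
      nlinarith [gpdf_pos u, abs_nonneg ((-u) / (1 + u ^ 2))]
    have hneg : Filter.Tendsto (fun u => -gpdf u) Filter.atBot (nhds 0) := by
      simpa using tendsto_gpdf_atBot.neg
    refine tendsto_of_tendsto_of_tendsto_of_le_of_le hneg tendsto_gpdf_atBot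
      (fun u => ?_) (fun u => ?_)
    · exact neg_le_of_abs_le (hb u)
    · exact le_of_abs_le (hb u)
  have hftc : ∫ x in Iic (-s), h' x = h (-s) := by
    have := integral_Iic_of_hasDerivAt_of_tendsto' (f := h) (f' := h') (a := -s)
      (fun x _ => hderiv x) hint.integrableOn htend
    simpa using this
  have hle : ∫ x in Iic (-s), h' x ≤ ∫ x in Iic (-s), gpdf x := by
    refine setIntegral_mono_on hint.integrableOn integrable_gpdf.integrableOn
      measurableSet_Iic fun x _ => le_of_abs_le (hbound x)
  rw [hftc] at hle
  rw [gaussCDF_def]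
  calc s / (1 + s ^ 2) * gpdf s = h (-s) := by
        show s / (1 + s ^ 2) * gpdf s = -(-s) / (1 + (-s) ^ 2) * gpdf (-s)
        rw [gpdf_neg, neg_neg, neg_sq]
  _ ≤ _ := hle


lemma sqrt_two_pi_pos : 0 < Real.sqrt (2 * π) := Real.sqrt_pos.mpr (by positivity)

lemma integral_gpdf_Iic_zero : ∫ x in Iic (0:ℝ), gpdf x = 1/2 := by
  have h1 : ∫ x in Iic (0:ℝ), gpdf x = ∫ x in Ioi (0:ℝ), gpdf x := by
    rw [show (0:ℝ) = -0 by norm_num, ← integral_comp_neg_Iic]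
    simp_rw [gpdf_neg]
    norm_num
  rw [h1]
  have h2 : ∫ x in Ioi (0:ℝ), gpdf x
      = (1 / Real.sqrt (2*π)) * ∫ x in Ioi (0:ℝ), Real.exp (-(1/2) * x ^ 2) := by
    rw [← integral_const_mul]
    refine setIntegral_congr_fun measurableSet_Ioi fun x _ => ?_
    rw [exp_arg]; rfl
  rw [h2, integral_gaussian_Ioi]
  have : Real.sqrt (π / (1/2)) = Real.sqrt (2 * π) := by norm_num; ring_nf
  rw [this]
  field_simp

/-- `Φ(-s) ≤ e^{-s²/2}/2` for `s ≥ 0`. -/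
lemma gaussCDF_neg_le_half (s : ℝ) (hs : 0 ≤ s) :
    gaussCDF (-s) ≤ Real.exp (-s ^ 2 / 2) / 2 := by
  rw [gaussCDF_def]
  have key : ∀ x : ℝ, x ∈ Iic (-s) →
      gpdf x ≤ Real.exp (-s ^ 2 / 2) * gpdf (x + s) := by
    intro x hx
    have hx' : x + s ≤ 0 := by simpa [Set.mem_Iic] using by linarith [Set.mem_Iic.mp hx]
    unfold gpdf
    rw [← mul_assoc, mul_comm (Real.exp (-s^2/2)) (1 / Real.sqrt (2*π)), mul_assoc,
      ← Real.exp_add]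
    have h2 : -x ^ 2 / 2 ≤ -s ^ 2 / 2 + -(x + s) ^ 2 / 2 := by nlinarith [mul_nonneg hs (neg_nonneg.mpr hx')]
    exact mul_le_mul_of_nonneg_left (Real.exp_le_exp.mpr h2) (by positivity)
  have hint : Integrable (fun x => Real.exp (-s ^ 2 / 2) * gpdf (x + s)) := by
    exact ((integrable_gpdf.comp_add_right s).const_mul _)
  calc (∫ x in Iic (-s), gpdf x)
      ≤ ∫ x in Iic (-s), Real.exp (-s ^ 2 / 2) * gpdf (x + s) :=
        setIntegral_mono_on integrable_gpdf.integrableOn hint.integrableOn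
          measurableSet_Iic key
  _ = Real.exp (-s ^ 2 / 2) * ∫ x in Iic (-s), gpdf (x + s) := integral_const_mul _ _
  _ = Real.exp (-s ^ 2 / 2) * ∫ x in Iic (0:ℝ), gpdf x := by
      congr 1
      rw [← integral_indicator measurableSet_Iic, ← integral_indicator measurableSet_Iic]
      have : ∀ x : ℝ, (Iic (-s)).indicator (fun x => gpdf (x + s)) x
          = (Iic (0:ℝ)).indicator gpdf (x + s) := by
        intro x
        by_cases hx : x ≤ -s
        · rw [Set.indicator_of_mem (Set.mem_Iic.mpr hx), Set.indicator_of_mem (Set.mem_Iic.mpr (by linarith))]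
        · rw [Set.indicator_of_notMem (fun h => hx (Set.mem_Iic.mp h)),
            Set.indicator_of_notMem (fun h => hx (by simpa using by linarith [Set.mem_Iic.mp h]))]
      simp_rw [this]
      exact integral_add_right_eq_self ((Iic (0:ℝ)).indicator gpdf) s
  _ = Real.exp (-s ^ 2 / 2) / 2 := by rw [integral_gpdf_Iic_zero]; ring

lemma mono_aux {p q γ : ℝ} (hp : 0 < p) (hpq : p ≤ q) (hq : q ≤ Real.exp (-1)) (hγ : 1 ≤ γ) :
    p ^ γ * (-Real.log p) ≤ q ^ γ * (-Real.log q) := by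
  have hq0 : 0 < q := lt_of_lt_of_le hp hpq
  have hlq : 1 ≤ -Real.log q := by
    have h := Real.log_le_log hq0 hq
    rw [Real.log_exp] at h
    linarith
  set r := p / q with hr
  have hr0 : 0 < r := div_pos hp hq0
  have hr1 : r ≤ 1 := (div_le_one hq0).mpr hpq
  have hp' : p = q * r := by rw [hr]; field_simp [hq0.ne']
  have hlogp : Real.log p = Real.log q + Real.log r := by
    rw [hp', Real.log_mul hq0.ne' hr0.ne']
  have hpow : p ^ γ = q ^ γ * r ^ γ := by rw [hp', Real.mul_rpow hq0.le hr0.le]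
  have hrγ : r ^ γ ≤ r := by
    calc r ^ γ ≤ r ^ (1:ℝ) := Real.rpow_le_rpow_of_exponent_ge hr0 hr1 hγ
    _ = r := Real.rpow_one r
  have hrγ0 : 0 ≤ r ^ γ := (Real.rpow_pos_of_pos hr0 γ).le
  have hlr : 0 ≤ -Real.log r := by
    have := Real.log_nonpos hr0.le hr1
    linarith
  have key : r * (-Real.log r) ≤ 1 - r := by
    have h := Real.log_le_sub_one_of_pos (show (0:ℝ) < 1/r by positivity)
    rw [one_div, Real.log_inv] at h
    have h2 : -Real.log r ≤ 1/r - 1 := by rw [one_div]; linarith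
    have := mul_le_mul_of_nonneg_left h2 hr0.le
    calc r * (-Real.log r) ≤ r * (1/r - 1) := this
    _ = 1 - r := by field_simp
  have h1 : r ^ γ * (-(Real.log q + Real.log r)) ≤ -Real.log q := by
    have e1 : r ^ γ * (-Real.log q) ≤ r * (-Real.log q) :=
      mul_le_mul_of_nonneg_right hrγ (by linarith)
    have e2 : r ^ γ * (-Real.log r) ≤ r * (-Real.log r) :=
      mul_le_mul_of_nonneg_right hrγ hlr
    have e3 : r * (-Real.log r) ≤ (1 - r) * (-Real.log q) := by
      calc r * (-Real.log r) ≤ 1 - r := key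
      _ = (1 - r) * 1 := by ring
      _ ≤ (1 - r) * (-Real.log q) := mul_le_mul_of_nonneg_left hlq (by linarith)
    have expand : r ^ γ * (-(Real.log q + Real.log r))
        = r ^ γ * (-Real.log q) + r ^ γ * (-Real.log r) := by ring
    rw [expand]
    nlinarith
  rw [hpow, hlogp]
  calc q ^ γ * r ^ γ * (-(Real.log q + Real.log r))
      = q ^ γ * (r ^ γ * (-(Real.log q + Real.log r))) := by ring
  _ ≤ q ^ γ * (-Real.log q) :=
      mul_le_mul_of_nonneg_left h1 (Real.rpow_pos_of_pos hq0 γ).le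

lemma gaussCDF_neg_one_le : gaussCDF (-1) ≤ Real.exp (-1) := by
  have h1 := gaussCDF_neg_le_half 1 zero_le_one
  have h2 : Real.exp (-(1:ℝ)^2/2) = Real.exp (-(1/2):ℝ) := by norm_num
  rw [h2] at h1
  have h3 : (1:ℝ)/2 ≤ Real.exp (-(1/2):ℝ) := by
    have := Real.add_one_le_exp (-(1/2):ℝ)
    linarith
  have h4 : Real.exp (-(1/2):ℝ) * Real.exp (-(1/2):ℝ) = Real.exp (-1:ℝ) := by
    rw [← Real.exp_add]; norm_num
  nlinarith [Real.exp_pos (-(1/2):ℝ)]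

/-- The key Gaussian-quantile comparison inequality. -/
lemma gauss_key (δ : ℝ) (hδ0 : 0 < δ) (hδ1 : δ < 1) (t q : ℝ)
    (hq1 : gaussCDF (-(Real.sqrt (1 - δ) * t)) ≤ q) (hq2 : q ≤ gaussCDF (-1)) :
    gaussCDF (-t) ≤ ((2:ℝ) ^ (1/(1-δ)) * Real.sqrt (1-δ) * (2*π) ^ (δ/(2*(1-δ)))) *
      (-Real.log q) ^ (δ/(2*(1-δ))) * q ^ (1/(1-δ)) := by
  set ε : ℝ := 1 - δ with hε
  clear_value ε
  have hε0 : 0 < ε := by simp [hε]; linarith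
  have hε1 : ε < 1 := by simp [hε]; linarith
  have hsqε : 0 < Real.sqrt ε := Real.sqrt_pos.mpr hε0
  have hsqε1 : Real.sqrt ε < 1 := by
    nlinarith [Real.sq_sqrt hε0.le, hsqε]
  set s : ℝ := Real.sqrt ε * t with hsdef
  clear_value s
  set A : ℝ := δ/(2*ε) with hA
  clear_value A
  have hA0 : 0 < A := by rw [hA]; positivity
  have hq0 : 0 < q := lt_of_lt_of_le (gaussCDF_pos _) hq1
  -- s ≥ 1
  have hs1 : 1 ≤ s := by
    by_contra h
    push_neg at h
    have : gaussCDF (-1) < gaussCDF (-s) := gaussCDF_strictMono (by linarith)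
    have : gaussCDF (-1) < gaussCDF (-1) := lt_of_lt_of_le (this.trans_le hq1) hq2
    exact lt_irrefl _ this
  have hs0 : 0 < s := by linarith
  have ht : t = s / Real.sqrt ε := by
    rw [hsdef]; field_simp
  have hts : s ≤ t := by
    rw [ht, le_div_iff₀ hsqε]
    nlinarith
  have ht0 : 0 < t := lt_of_lt_of_le hs0 hts
  set p : ℝ := gaussCDF (-s) with hp
  clear_value p
  have hp0 : 0 < p := by rw [hp]; exact gaussCDF_pos _
  have hpq : p ≤ q := hq1
  have hqe : q ≤ Real.exp (-1) := hq2.trans gaussCDF_neg_one_le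
  have hlogq : 1 ≤ -Real.log q := by
    have h := Real.log_le_log hq0 hqe
    rw [Real.log_exp] at h; linarith
  have hphalf : p ≤ Real.exp (-s ^ 2 / 2) / 2 := by rw [hp]; exact gaussCDF_neg_le_half s hs0.le
  have hlogp : s ^ 2 / 2 + Real.log 2 ≤ -Real.log p := by
    have h := Real.log_le_log hp0 hphalf
    rw [Real.log_div (Real.exp_ne_zero _) two_ne_zero, Real.log_exp] at h
    linarith
  have hlog2 : (0.6931471803:ℝ) < Real.log 2 := Real.log_two_gt_d9
  have hlogp0 : 0 ≤ -Real.log p := by nlinarith [sq_nonneg s]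
  have hplow : s / (1 + s ^ 2) * gpdf s ≤ p := by rw [hp]; exact gaussCDF_neg_ge s
  have ht2 : t ^ 2 = s ^ 2 / ε := by
    rw [ht, div_pow, Real.sq_sqrt hε0.le]
  -- Step C : gpdf t = gpdf s * exp(-A s²)
  have hgt : gpdf t = gpdf s * Real.exp (-(A * s ^ 2)) := by
    have harg : -t ^ 2 / 2 = -s ^ 2 / 2 + -(A * s ^ 2) := by
      rw [ht2, hA]; field_simp; linear_combination hε
    unfold gpdf
    rw [harg, Real.exp_add]; ring
  -- gpdf s ≤ 2 s p
  have hplow' : s * gpdf s ≤ p * (1 + s ^ 2) := by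
    rw [div_mul_eq_mul_div, div_le_iff₀ (by positivity)] at hplow
    linarith
  have hgs2 : gpdf s ≤ 2 * s * p := by
    nlinarith [gpdf_pos s, hp0]
  -- main pointwise bound
  have hmain : gaussCDF (-t) ≤ 2 * Real.sqrt ε * Real.exp (-(A * s ^ 2)) * p := by
    have hAex := gaussCDF_neg_le t ht0
    have hE : (0:ℝ) ≤ Real.exp (-(A * s ^ 2)) := (Real.exp_pos _).le
    calc gaussCDF (-t) ≤ gpdf t / t := hAex
    _ ≤ 2 * Real.sqrt ε * Real.exp (-(A * s ^ 2)) * p := by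
        rw [div_le_iff₀ ht0, hgt, ht]
        have hrw : 2 * Real.sqrt ε * Real.exp (-(A * s ^ 2)) * p * (s / Real.sqrt ε)
            = (2 * s * p) * Real.exp (-(A * s ^ 2)) := by
          field_simp
        rw [hrw]
        exact mul_le_mul_of_nonneg_right hgs2 hE
  -- Step D : exp(-s²) ≤ 8π(-log p)p²
  have hgsq : gpdf s ^ 2 = Real.exp (-s ^ 2) / (2 * π) := by
    unfold gpdf
    rw [mul_pow, div_pow, one_pow, Real.sq_sqrt (by positivity : (0:ℝ) ≤ 2 * π),
      pow_two, ← Real.exp_add, show -s ^ 2 / 2 + -s ^ 2 / 2 = -s ^ 2 by ring]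
    ring
  have hp2 : s ^ 2 * Real.exp (-s ^ 2) / ((2 * π) * (1 + s ^ 2) ^ 2) ≤ p ^ 2 := by
    have hnn : (0:ℝ) ≤ s / (1 + s ^ 2) * gpdf s :=
      mul_nonneg (div_nonneg hs0.le (by positivity)) (gpdf_pos s).le
    have h := pow_le_pow_left₀ hnn hplow 2
    rw [mul_pow, div_pow, hgsq] at h
    calc s ^ 2 * Real.exp (-s ^ 2) / ((2 * π) * (1 + s ^ 2) ^ 2)
        = s ^ 2 / (1 + s ^ 2) ^ 2 * (Real.exp (-s ^ 2) / (2 * π)) := by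
          rw [div_mul_div_comm, mul_comm ((1 + s ^ 2) ^ 2) (2 * π)]
    _ ≤ p ^ 2 := h
  have hs2 : 1 ≤ s ^ 2 := by
    calc (1:ℝ) = 1 * 1 := by ring
    _ ≤ s * s := mul_le_mul hs1 hs1 zero_le_one (by linarith)
    _ = s ^ 2 := by ring
  have hs4 : 1 ≤ s ^ 4 := by
    calc (1:ℝ) = 1 * 1 := by ring
    _ ≤ s ^ 2 * s ^ 2 := mul_le_mul hs2 hs2 zero_le_one (by positivity)
    _ = s ^ 4 := by ring
  have hD : Real.exp (-s ^ 2) ≤ 8 * π * (-Real.log p) * p ^ 2 := by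
    have hfac : 1 ≤ 8 * π * (s ^ 2 / 2 + Real.log 2) * s ^ 2 / ((2 * π) * (1 + s ^ 2) ^ 2) := by
      rw [le_div_iff₀ (by positivity)]
      have hA1 : 0 ≤ π * (s ^ 4 - 1) := mul_nonneg pi_pos.le (by linarith)
      have hA2 : 0 ≤ π * s ^ 2 * (Real.log 2 - 1/2) :=
        mul_nonneg (mul_nonneg pi_pos.le (by positivity)) (by linarith)
      linarith [hA1, hA2]
    calc Real.exp (-s ^ 2) = Real.exp (-s ^ 2) * 1 := by ring
    _ ≤ Real.exp (-s ^ 2) *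
        (8 * π * (s ^ 2 / 2 + Real.log 2) * s ^ 2 / ((2 * π) * (1 + s ^ 2) ^ 2)) :=
        mul_le_mul_of_nonneg_left hfac (Real.exp_pos _).le
    _ = 8 * π * (s ^ 2 / 2 + Real.log 2) *
        (s ^ 2 * Real.exp (-s ^ 2) / ((2 * π) * (1 + s ^ 2) ^ 2)) := by ring
    _ ≤ 8 * π * (-Real.log p) * p ^ 2 := by
        have hb1 : 8 * π * (s ^ 2 / 2 + Real.log 2) ≤ 8 * π * (-Real.log p) :=
          mul_le_mul_of_nonneg_left hlogp (by positivity)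
        have hb0 : (0:ℝ) ≤ s ^ 2 * Real.exp (-s ^ 2) / ((2 * π) * (1 + s ^ 2) ^ 2) := by
          positivity
        exact mul_le_mul hb1 hp2 hb0 (by positivity)
  -- Step E : exp(-A s²) ≤ (8π(-log p)p²)^A
  have hE2 : Real.exp (-(A * s ^ 2)) ≤ (8 * π * (-Real.log p) * p ^ 2) ^ A := by
    have h1 : Real.exp (-(A * s ^ 2)) = (Real.exp (-s ^ 2)) ^ A := by
      rw [← Real.exp_mul]; congr 1; ring
    rw [h1]
    exact Real.rpow_le_rpow (Real.exp_pos _).le hD hA0.le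
  -- expand rpow of product
  have hsplit : (8 * π * (-Real.log p) * p ^ 2) ^ A
      = (2:ℝ) ^ (2 * A) * (2 * π) ^ A * ((-Real.log p) ^ A * p ^ (2 * A)) := by
    rw [show 8 * π * (-Real.log p) * p ^ 2 = (4 * (2 * π)) * ((-Real.log p) * p ^ 2) by ring,
      Real.mul_rpow (by positivity) (mul_nonneg hlogp0 (by positivity)),
      Real.mul_rpow (by norm_num) (by positivity : (0:ℝ) ≤ 2 * π),
      Real.mul_rpow hlogp0 (by positivity)]
    have h4 : (4:ℝ) ^ A = (2:ℝ) ^ (2 * A) := by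
      rw [show (4:ℝ) = (2:ℝ) ^ (2:ℝ) by norm_num [Real.rpow_two], ← Real.rpow_mul (by norm_num)]
    have hps : (p ^ 2) ^ A = p ^ (2 * A) := by
      rw [← Real.rpow_two, ← Real.rpow_mul hp0.le]
    rw [h4, hps]
  -- exponent identities
  have hexp1 : 1 + 2 * A = 1 / ε := by
    rw [hA]
    field_simp [hε0.ne']
    linarith
  have hKe : 2 * Real.sqrt ε * ((2:ℝ) ^ (2 * A) * (2 * π) ^ A)
      = (2:ℝ) ^ (1 / ε) * Real.sqrt ε * (2 * π) ^ A := by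
    rw [← hexp1, Real.rpow_add two_pos, Real.rpow_one]; ring
  -- combine so far
  have hcomb : gaussCDF (-t) ≤ ((2:ℝ) ^ (1 / ε) * Real.sqrt ε * (2 * π) ^ A) *
      ((-Real.log p) ^ A * p ^ (2 * A) * p) := by
    calc gaussCDF (-t) ≤ 2 * Real.sqrt ε * Real.exp (-(A * s ^ 2)) * p := hmain
    _ ≤ 2 * Real.sqrt ε * ((8 * π * (-Real.log p) * p ^ 2) ^ A) * p := by
        have := mul_le_mul_of_nonneg_right
          (mul_le_mul_of_nonneg_left hE2 (by positivity : (0:ℝ) ≤ 2 * Real.sqrt ε)) hp0.le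
        linarith
    _ = ((2:ℝ) ^ (1 / ε) * Real.sqrt ε * (2 * π) ^ A) *
        ((-Real.log p) ^ A * p ^ (2 * A) * p) := by
        rw [hsplit, ← hKe]; ring
  have hppow : p ^ (2 * A) * p = p ^ (1 / ε) := by
    rw [← hexp1, Real.rpow_add hp0, Real.rpow_one]; ring
  -- Step G : monotone transfer
  have hγ : (1:ℝ) ≤ 2 / δ := by
    rw [le_div_iff₀ hδ0]; linarith
  have hmono := mono_aux hp0 hpq hqe hγ
  have hγA : (2 / δ) * A = 1 / ε := by
    rw [hA]
    field_simp [hε0.ne', hδ0.ne']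
  have htrans : (-Real.log p) ^ A * p ^ (1 / ε) ≤ (-Real.log q) ^ A * q ^ (1 / ε) := by
    have h := Real.rpow_le_rpow
      (mul_nonneg (Real.rpow_nonneg hp0.le _) hlogp0) hmono hA0.le
    rw [Real.mul_rpow (Real.rpow_nonneg hp0.le _) hlogp0,
      Real.mul_rpow (Real.rpow_nonneg hq0.le _) (by linarith : (0:ℝ) ≤ -Real.log q),
      ← Real.rpow_mul hp0.le, ← Real.rpow_mul hq0.le, hγA] at h
    calc (-Real.log p) ^ A * p ^ (1 / ε) = p ^ (1 / ε) * (-Real.log p) ^ A := by ring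
    _ ≤ q ^ (1 / ε) * (-Real.log q) ^ A := h
    _ = (-Real.log q) ^ A * q ^ (1 / ε) := by ring
  calc gaussCDF (-t) ≤ ((2:ℝ) ^ (1 / ε) * Real.sqrt ε * (2 * π) ^ A) *
      ((-Real.log p) ^ A * p ^ (2 * A) * p) := hcomb
  _ = ((2:ℝ) ^ (1 / ε) * Real.sqrt ε * (2 * π) ^ A) *
      ((-Real.log p) ^ A * p ^ (1 / ε)) := by rw [mul_assoc ((-Real.log p) ^ A), hppow]
  _ ≤ ((2:ℝ) ^ (1 / ε) * Real.sqrt ε * (2 * π) ^ A) *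
      ((-Real.log q) ^ A * q ^ (1 / ε)) := by
      refine mul_le_mul_of_nonneg_left htrans ?_
      have : (0:ℝ) ≤ (2:ℝ) ^ (1 / ε) := Real.rpow_nonneg (by norm_num) _
      positivity
  _ = (2:ℝ) ^ (1 / ε) * Real.sqrt ε * (2 * π) ^ A *
      (-Real.log q) ^ A * q ^ (1 / ε) := by ring

/-- Altitude-training error bound (Theorem 1): with `S = Σ_j w_j Z_j`,
`Z_j ~ Poisson(λ_j)` independent, `S̃ = Σ_j w_j Z̃_j`, `Z̃_j ~ Poisson((1−δ)λ_j)`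
independent, `m = E[S] > 0`, `σ² = Var S > 0`,
`Ψ = max_j w_j² / Σ_j λ_j w_j²`, `C = 4`: if the Berry–Esseen inequalities
`P(S̃ ≤ 0) ≥ Φ(−√(1−δ)·m/σ) − (C/√(1−δ))√Ψ` and `P(S ≤ 0) ≤ Φ(−m/σ) + C√Ψ`
hold and `P(S̃ ≤ 0) + (C/√(1−δ))√Ψ ≤ Φ(−1)`, then
`P(S ≤ 0) ≤ K(δ)·(−log(P(S̃≤0)+(C/√(1−δ))√Ψ))^{δ/(2(1−δ))}
· (P(S̃≤0)+(C/√(1−δ))√Ψ)^{1/(1−δ)} + C√Ψ`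
with `K(δ) = 2^{1/(1−δ)}√(1−δ)(2π)^{δ/(2(1−δ))}`. -/
theorem altitude_training_error_bound
    {Ω : Type*} [MeasurableSpace Ω] (μmeas : Measure Ω) [IsProbabilityMeasure μmeas]
    (d : ℕ) (hd : 0 < d) (lam : Fin d → ℝ≥0) (w : Fin d → ℝ) (δ : ℝ≥0)
    (hδ0 : 0 < δ) (hδ1 : δ < 1)
    (Z : Fin d → Ω → ℕ) (hZmeas : ∀ j, Measurable (Z j))
    (hZindep : iIndepFun Z μmeas)
    (hZdist : ∀ j, Measure.map (Z j) μmeas = poissonMeasure (lam j))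
    (Zt : Fin d → Ω → ℕ) (hZtmeas : ∀ j, Measurable (Zt j))
    (hZtindep : iIndepFun Zt μmeas)
    (hZtdist : ∀ j, Measure.map (Zt j) μmeas = poissonMeasure ((1 - δ) * lam j))
    (S St : Ω → ℝ)
    (hS : S = fun ω => ∑ j, w j * (Z j ω : ℝ))
    (hSt : St = fun ω => ∑ j, w j * (Zt j ω : ℝ))
    (m σ Ψ pS pSt : ℝ)
    (hm : m = ∑ j, (lam j : ℝ) * w j) (hmpos : 0 < m)
    (hσ : σ ^ 2 = ∑ j, (lam j : ℝ) * w j ^ 2) (hσpos : 0 < σ)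
    (hΨ : Ψ = (univ.sup' (univ_nonempty_iff.mpr ⟨⟨0, hd⟩⟩) fun j => (w j) ^ 2) /
      ∑ j, (lam j : ℝ) * w j ^ 2)
    (hpS : pS = (μmeas {ω | S ω ≤ 0}).toReal)
    (hpSt : pSt = (μmeas {ω | St ω ≤ 0}).toReal)
    (hlb : gaussCDF (-(Real.sqrt (1 - (δ : ℝ)) * m / σ)) -
      4 / Real.sqrt (1 - (δ : ℝ)) * Real.sqrt Ψ ≤ pSt)
    (hub : pS ≤ gaussCDF (-(m / σ)) + 4 * Real.sqrt Ψ)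
    (hsmall : pSt + 4 / Real.sqrt (1 - (δ : ℝ)) * Real.sqrt Ψ ≤ gaussCDF (-1)) :
    pS ≤
      ((2 : ℝ) ^ (1 / (1 - (δ : ℝ))) * Real.sqrt (1 - (δ : ℝ)) *
          (2 * π) ^ ((δ : ℝ) / (2 * (1 - (δ : ℝ))))) *
        (-Real.log (pSt + 4 / Real.sqrt (1 - (δ : ℝ)) * Real.sqrt Ψ)) ^
          ((δ : ℝ) / (2 * (1 - (δ : ℝ)))) *
        (pSt + 4 / Real.sqrt (1 - (δ : ℝ)) * Real.sqrt Ψ) ^ (1 / (1 - (δ : ℝ))) +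
      4 * Real.sqrt Ψ := by
  have hδ0r : (0:ℝ) < (δ : ℝ) := hδ0
  have hδ1r : ((δ : ℝ)) < 1 := hδ1
  set q : ℝ := pSt + 4 / Real.sqrt (1 - (δ : ℝ)) * Real.sqrt Ψ with hqdef
  have hq1 : gaussCDF (-(Real.sqrt (1 - (δ : ℝ)) * (m / σ))) ≤ q := by
    have h : Real.sqrt (1 - (δ : ℝ)) * (m / σ) = Real.sqrt (1 - (δ : ℝ)) * m / σ :=
      (mul_div_assoc _ _ _).symm
    rw [h, hqdef]
    linarith [hlb]
  have hkey := gauss_key (δ : ℝ) hδ0r hδ1r (m / σ) q hq1 hsmall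
  calc pS ≤ gaussCDF (-(m / σ)) + 4 * Real.sqrt Ψ := hub
  _ ≤ ((2:ℝ) ^ (1/(1-(δ:ℝ))) * Real.sqrt (1-(δ:ℝ)) * (2*π) ^ ((δ:ℝ)/(2*(1-(δ:ℝ))))) *
      (-Real.log q) ^ ((δ:ℝ)/(2*(1-(δ:ℝ)))) * q ^ (1/(1-(δ:ℝ))) + 4 * Real.sqrt Ψ := by
      linarith [hkey]
end
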